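/- Let p be a point sphere complex, f^p a point sphere (isotropic, ⟨f^p,p⟩ = 0), r isotropic with ⟨f^p,r⟩ = 0, and a ∈ ℝ^{4,2} with ⟨a,a⟩ ≠ 0, ⟨r,a⟩ = 0 and ⟨f^p,a⟩ ≠ 0. Let f̂^p be a nonzero isotropic vector in span{σ_a(f^p), r} with ⟨f̂^p,p⟩ = 0 and f̂^p ∉ span{r}, and set γ := span{f^p, f̂^p, r + ⟨r,p⟩p}, the circle of the cyclic circle congruence associated to the Ribaucour pair (span{f^p,r}, σ_a(span{f^p,r})). Then every isotropic vector e ∈ span{a,p} is orthogonal to the circle γ: ⟨e, v + ⟨v,p⟩p⟩ = 0 for every isotropic v ∈ γ^⊥. Thus, if the 2-dimensional subspace span{a,p} contains a sphere, then this sphere, regarded as a totally umbilic surface, is orthogonal to the associated cyclic circle congruence and hence belongs to the Lamé family of the Dupin cyclidic system generated by the evolution along span{a,p}. -/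
import Mathlib


noncomputable section

/-- The symmetric bilinear form of signature (4,2) on ℝ⁶, modelling ℝ^{4,2}. -/
def B (x y : Fin 6 → ℝ) : ℝ :=
  x 0 * y 0 + x 1 * y 1 + x 2 * y 2 + x 3 * y 3 - x 4 * y 4 - x 5 * y 5

/-- The Lie inversion with respect to the linear sphere complex `a`. -/
def lieInv (a x : Fin 6 → ℝ) : Fin 6 → ℝ :=
  x - (2 * B x a / B a a) • a

lemma B_symm (x y : Fin 6 → ℝ) : B x y = B y x := by unfold B; ring

lemma B_add_left (x y z : Fin 6 → ℝ) : B (x + y) z = B x z + B y z := by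
  simp only [B, Pi.add_apply]; ring

lemma B_smul_left (c : ℝ) (x y : Fin 6 → ℝ) : B (c • x) y = c * B x y := by
  simp only [B, Pi.smul_apply, smul_eq_mul]; ring

lemma B_add_right (x y z : Fin 6 → ℝ) : B x (y + z) = B x y + B x z := by
  simp only [B, Pi.add_apply]; ring

lemma B_smul_right (c : ℝ) (x y : Fin 6 → ℝ) : B x (c • y) = c * B x y := by
  simp only [B, Pi.smul_apply, smul_eq_mul]; ring

lemma B_sub_right (x y z : Fin 6 → ℝ) : B x (y - z) = B x y - B x z := by
  simp only [B, Pi.sub_apply]; ring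

lemma B_sub_left (x y z : Fin 6 → ℝ) : B (x - y) z = B x z - B y z := by
  simp only [B, Pi.sub_apply]; ring

/-- With the circle `γ = span{fp, fq, r + ⟨r,p⟩p}` of the
cyclic circle congruence associated to the Ribaucour pair `(span{fp,r},
σ_a(span{fp,r}))`: every isotropic vector `e ∈ span{a,p}` — a sphere contained
in the 2-dimensional evolution space — is orthogonal to the circle `γ`, hence
belongs, as totally umbilic surface, to the Lamé family of the generated
Dupin cyclidic system. -/
theorem stmt_11 (p fp r a : Fin 6 → ℝ) (hp : B p p = -1)
    (hfp : fp ≠ 0) (ifp : B fp fp = 0) (hfpp : B fp p = 0)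
    (hr : r ≠ 0) (ir : B r r = 0) (hfr : B fp r = 0)
    (ha : B a a ≠ 0) (hra : B r a = 0) (hfa : B fp a ≠ 0)
    (fq : Fin 6 → ℝ) (hfq : fq ≠ 0) (ifq : B fq fq = 0) (hfqp : B fq p = 0)
    (hfqmem : fq ∈ Submodule.span ℝ ({lieInv a fp, r} : Set (Fin 6 → ℝ)))
    (hfqr : fq ∉ Submodule.span ℝ ({r} : Set (Fin 6 → ℝ)))
    (γ : Submodule ℝ (Fin 6 → ℝ))
    (hγ : γ = Submodule.span ℝ ({fp, fq, r + B r p • p} : Set (Fin 6 → ℝ))) :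
    ∀ e ∈ Submodule.span ℝ ({a, p} : Set (Fin 6 → ℝ)), e ≠ 0 → B e e = 0 →
      ∀ v : Fin 6 → ℝ, v ≠ 0 → B v v = 0 → (∀ x ∈ γ, B v x = 0) →
        B e (v + B v p • p) = 0 := by
  intro e he hene hee v hv hvv hvorth
  obtain ⟨α, β, rfl⟩ := Submodule.mem_span_pair.mp he
  obtain ⟨l, m, hfqe⟩ := Submodule.mem_span_pair.mp hfqmem
  have hl : l ≠ 0 := by
    intro h
    apply hfqr
    rw [← hfqe, h, zero_smul, zero_add]
    exact Submodule.smul_mem _ _ (Submodule.mem_span_singleton_self r)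
  set k : ℝ := 2 * B fp a / B a a with hkdef
  have hk : k ≠ 0 := div_ne_zero (mul_ne_zero two_ne_zero hfa) ha
  have h1 : B v fp = 0 := hvorth fp (by rw [hγ]; exact Submodule.subset_span (by simp))
  have h2 : B v fq = 0 := hvorth fq (by rw [hγ]; exact Submodule.subset_span (by simp))
  have h3 : B v (r + B r p • p) = 0 :=
    hvorth _ (by rw [hγ]; exact Submodule.subset_span (by simp))
  rw [B_add_right, B_smul_right] at h3
  have h2' : l * (B v fp - k * B v a) + m * B v r = 0 := by
    rw [← hfqe, B_add_right, B_smul_right, B_smul_right] at h2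
    simpa only [lieInv, B_sub_right, B_smul_right, ← hkdef] using h2
  have hq' : l * (B fp p - k * B a p) + m * B r p = 0 := by
    rw [← hfqe, B_add_left, B_smul_left, B_smul_left] at hfqp
    simpa only [lieInv, B_sub_left, B_smul_left, ← hkdef] using hfqp
  have key : l * k * (B v a + B v p * B a p) = 0 := by
    have hrv : B v r = B r v := B_symm v r
    have hpv : B v p = B p v := B_symm v p
    linear_combination (-1 : ℝ) * h2' - B v p * hq' + m * h3 + l * h1 + l * B v p * hfpp
  have hA : B v a + B v p * B a p = 0 :=
    (mul_eq_zero.mp key).resolve_left (mul_ne_zero hl hk)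
  rw [B_add_left, B_smul_left, B_smul_left, B_add_right, B_add_right,
    B_smul_right, B_smul_right]
  have s1 : B a v = B v a := B_symm a v
  have s2 : B p v = B v p := B_symm p v
  linear_combination α * hA + α * s1 + α * B v p * (B_symm a p) + α * B v p * (B_symm p a) + β * s2 + β * B v p * hp
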